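/- Let n ≥ 1, fix w_1,…,w_n ∈ {0,1}, and let η, ν ∈ (0,1] with η + ν > 1. On a probability space, let D_1,…,D_n be {0,1}-valued random variables with p_i := P(D_i = 1) > 0 for every i, and for each i let F_i and G_i be {0,1}-valued random variables with P(F_i = 1) = η and P(G_i = 1) = ν, such that the pair (F_i, G_i) is independent of the random vector (D_1,…,D_n). Define Y_i = D_i·(F_i·(1 − w_i) + (1 − G_i)·w_i) and ω_i = 1/p_i. Then E[(η + ν − 1)^{-1} · Σ_{i=1}^n ω_i·D_i·(1 − Y_i) − (1 − η)·(η + ν − 1)^{-1} · Σ_{i=1}^n ω_i·D_i] = Σ_{i=1}^n w_i. -/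

import Mathlib

open MeasureTheory ProbabilityTheory

lemma int01_aux {Ω : Type*} [MeasurableSpace Ω] (μ : Measure Ω) [IsProbabilityMeasure μ]
    (X : Ω → ℝ) (hX : Measurable X) (h01 : ∀ ω, X ω = 0 ∨ X ω = 1) :
    Integrable X μ ∧ ∫ ω, X ω ∂μ = (μ {ω | X ω = 1}).toReal := by
  have hs : MeasurableSet {ω | X ω = 1} := hX (measurableSet_singleton 1)
  have hXeq : X = Set.indicator {ω | X ω = 1} (fun _ => (1 : ℝ)) := by
    funext ω
    rcases h01 ω with h | h <;> simp [Set.indicator, h]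
  constructor
  · rw [hXeq]
    exact (integrable_const (1 : ℝ)).indicator hs
  · rw [hXeq, integral_indicator_const _ hs]
    simp [measureReal_def]

/-- Theorem 1 of the paper, with fixed well-statuses: the
inverse-probability-of-testing-weighted Horvitz–Thompson-type estimator is unbiased for
the number of well individuals `Σ wᵢ`. -/
theorem stmt3
    {Ω : Type*} [MeasurableSpace Ω] (μ : Measure Ω) [IsProbabilityMeasure μ]
    (n : ℕ) (hn : 0 < n)
    (w : Fin n → ℝ) (hw : ∀ i, w i = 0 ∨ w i = 1)
    (η ν : ℝ) (hη : η ∈ Set.Ioc (0 : ℝ) 1) (hν : ν ∈ Set.Ioc (0 : ℝ) 1)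
    (hην : 1 < η + ν)
    (D F G : Fin n → Ω → ℝ)
    (hDmeas : ∀ i, Measurable (D i)) (hFmeas : ∀ i, Measurable (F i))
    (hGmeas : ∀ i, Measurable (G i))
    (hD01 : ∀ i ω, D i ω = 0 ∨ D i ω = 1)
    (hF01 : ∀ i ω, F i ω = 0 ∨ F i ω = 1)
    (hG01 : ∀ i ω, G i ω = 0 ∨ G i ω = 1)
    (p : Fin n → ℝ) (hp : ∀ i, p i = (μ {ω | D i ω = 1}).toReal)
    (hppos : ∀ i, 0 < p i)
    (hF1 : ∀ i, (μ {ω | F i ω = 1}).toReal = η)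
    (hG1 : ∀ i, (μ {ω | G i ω = 1}).toReal = ν)
    (hindep : ∀ i, IndepFun (fun ω => (F i ω, G i ω)) (fun ω j => D j ω) μ)
    (Y : Fin n → Ω → ℝ)
    (hY : ∀ i ω, Y i ω = D i ω * (F i ω * (1 - w i) + (1 - G i ω) * w i)) :
    ∫ ω, ((η + ν - 1)⁻¹ * ∑ i, (p i)⁻¹ * D i ω * (1 - Y i ω)
        - (1 - η) * (η + ν - 1)⁻¹ * ∑ i, (p i)⁻¹ * D i ω) ∂μ
      = ∑ i, w i := by
  have hc : η + ν - 1 ≠ 0 := by linarith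
  have hDint : ∀ i, Integrable (D i) μ := fun i =>
    (int01_aux μ (D i) (hDmeas i) (hD01 i)).1
  have hDE : ∀ i, ∫ ω, D i ω ∂μ = p i := fun i => by
    rw [(int01_aux μ (D i) (hDmeas i) (hD01 i)).2, hp i]
  have hFint : ∀ i, Integrable (F i) μ := fun i =>
    (int01_aux μ (F i) (hFmeas i) (hF01 i)).1
  have hFE : ∀ i, ∫ ω, F i ω ∂μ = η := fun i => by
    rw [(int01_aux μ (F i) (hFmeas i) (hF01 i)).2, hF1 i]
  have hGint : ∀ i, Integrable (G i) μ := fun i =>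
    (int01_aux μ (G i) (hGmeas i) (hG01 i)).1
  have hGE : ∀ i, ∫ ω, G i ω ∂μ = ν := fun i => by
    rw [(int01_aux μ (G i) (hGmeas i) (hG01 i)).2, hG1 i]
  set Z : Fin n → Ω → ℝ := fun i ω => 1 - (F i ω * (1 - w i) + (1 - G i ω) * w i) with hZ
  have hZmeas : ∀ i, Measurable (Z i) := fun i => by
    apply Measurable.sub measurable_const
    exact ((hFmeas i).mul_const _).add ((measurable_const.sub (hGmeas i)).mul_const _)
  have hZint : ∀ i, Integrable (Z i) μ := fun i => by
    apply (integrable_const (1 : ℝ)).sub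
    exact ((hFint i).mul_const _).add (((integrable_const (1 : ℝ)).sub (hGint i)).mul_const _)
  have hZE : ∀ i, ∫ ω, Z i ω ∂μ = 1 - (η * (1 - w i) + (1 - ν) * w i) := fun i => by
    have h1a : Integrable (fun ω => F i ω * (1 - w i)) μ := (hFint i).mul_const _
    have h1b : Integrable (fun ω => (1 - G i ω) * w i) μ :=
      ((integrable_const (1 : ℝ)).sub (hGint i)).mul_const _
    have h1 : Integrable (fun ω => F i ω * (1 - w i) + (1 - G i ω) * w i) μ := h1a.add h1b
    have h2 : Integrable (fun ω => (1 : ℝ) - G i ω) μ := (integrable_const (1 : ℝ)).sub (hGint i)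
    show ∫ ω, (1 - (F i ω * (1 - w i) + (1 - G i ω) * w i)) ∂μ = _
    rw [integral_sub (integrable_const 1) h1, integral_add h1a h1b,
      integral_mul_const, integral_mul_const,
      integral_sub (integrable_const 1) (hGint i), hFE i, hGE i]
    simp
  have hDY : ∀ i ω, D i ω * (1 - Y i ω) = D i ω * Z i ω := fun i ω => by
    rcases hD01 i ω with h | h <;> simp [hY, hZ, h]
  have hindepZ : ∀ i, IndepFun (D i) (Z i) μ := fun i => by
    have hφ : Measurable (fun q : ℝ × ℝ => 1 - (q.1 * (1 - w i) + (1 - q.2) * w i)) :=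
      measurable_const.sub ((measurable_fst.mul_const _).add
        ((measurable_const.sub measurable_snd).mul_const _))
    exact ((hindep i).comp hφ (measurable_pi_apply i)).symm
  have hprod : ∀ i, ∫ ω, D i ω * Z i ω ∂μ
      = p i * (1 - (η * (1 - w i) + (1 - ν) * w i)) := fun i => by
    rw [(hindepZ i).integral_fun_mul_eq_mul_integral (hDmeas i).aestronglyMeasurable
      (hZmeas i).aestronglyMeasurable, hDE i, hZE i]
  have hprodint : ∀ i, Integrable (fun ω => D i ω * Z i ω) μ := fun i =>
    (hindepZ i).integrable_mul (hDint i) (hZint i)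
  have hpt : ∀ ω, ((η + ν - 1)⁻¹ * ∑ i, (p i)⁻¹ * D i ω * (1 - Y i ω)
      - (1 - η) * (η + ν - 1)⁻¹ * ∑ i, (p i)⁻¹ * D i ω)
      = ∑ i, ((η + ν - 1)⁻¹ * ((p i)⁻¹ * (D i ω * Z i ω))
          - (1 - η) * (η + ν - 1)⁻¹ * ((p i)⁻¹ * D i ω)) := fun ω => by
    rw [Finset.sum_sub_distrib, ← Finset.mul_sum, ← Finset.mul_sum]
    congr 2
    apply Finset.sum_congr rfl
    intro i _
    rw [mul_assoc, hDY i ω]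
  have hterm : ∀ i : Fin n, Integrable (fun ω => (η + ν - 1)⁻¹ * ((p i)⁻¹ * (D i ω * Z i ω))
      - (1 - η) * (η + ν - 1)⁻¹ * ((p i)⁻¹ * D i ω)) μ := fun i => by
    exact (((hprodint i).const_mul _).const_mul _).sub (((hDint i).const_mul _).const_mul _)
  calc ∫ ω, ((η + ν - 1)⁻¹ * ∑ i, (p i)⁻¹ * D i ω * (1 - Y i ω)
        - (1 - η) * (η + ν - 1)⁻¹ * ∑ i, (p i)⁻¹ * D i ω) ∂μ
      = ∫ ω, ∑ i, ((η + ν - 1)⁻¹ * ((p i)⁻¹ * (D i ω * Z i ω))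
          - (1 - η) * (η + ν - 1)⁻¹ * ((p i)⁻¹ * D i ω)) ∂μ :=
        integral_congr_ae (Filter.Eventually.of_forall hpt)
    _ = ∑ i, ∫ ω, ((η + ν - 1)⁻¹ * ((p i)⁻¹ * (D i ω * Z i ω))
          - (1 - η) * (η + ν - 1)⁻¹ * ((p i)⁻¹ * D i ω)) ∂μ :=
        integral_finset_sum _ (fun i _ => hterm i)
    _ = ∑ i, w i := by
        apply Finset.sum_congr rfl
        intro i _
        rw [integral_sub (((hprodint i).const_mul _).const_mul _)
          (((hDint i).const_mul _).const_mul _)]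
        rw [integral_const_mul, integral_const_mul, integral_const_mul, integral_const_mul,
          hprod i, hDE i]
        have hpne : p i ≠ 0 := (hppos i).ne'
        field_simp
        rcases hw i with h | h <;> rw [h] <;> ring
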